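/- (Stability of the cross-covariance in the ensemble.) Let X^(1),…,X^(M) and Y^(1),…,Y^(M) be two ensembles in ℝ^d with M ≥ 2 and let g : ℝ^d → ℝ^p be Lipschitz with constant L. Write E_X := [X^(i) − x̄]_{i=1}^M, 𝒢_X := [g(X^(i)) − ḡ_X]_{i=1}^M, tr(P_X) := (1/(M−1))Σ_i ‖X^(i) − x̄‖², and analogously E_Y, 𝒢_Y, tr(P_Y) for the Y-ensemble. Then (1/(M−1)) ‖E_X 𝒢_Xᵀ − E_Y 𝒢_Yᵀ‖ ≤ 2L (tr(P_X)^{1/2} + tr(P_Y)^{1/2}) · ((1/(M−1)) Σ_{i=1}^M ‖X^(i) − Y^(i)‖²)^{1/2}. -/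

import Mathlib

open Matrix MeasureTheory
open scoped Matrix.Norms.L2Operator NNReal RealInnerProductSpace

/-- The ensemble mean `x̄ = (1/M) ∑ᵢ X⁽ⁱ⁾`. -/
noncomputable def ensMean {d M : ℕ} (X : Fin M → EuclideanSpace ℝ (Fin d)) :
    EuclideanSpace ℝ (Fin d) :=
  (M : ℝ)⁻¹ • ∑ i, X i

/-- The matrix of ensemble deviations, with columns `X⁽ⁱ⁾ − x̄`. -/
noncomputable def devMat {d M : ℕ} (X : Fin M → EuclideanSpace ℝ (Fin d)) :
    Matrix (Fin d) (Fin M) ℝ :=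
  Matrix.of fun j i => (X i - ensMean X) j

/-- The trace of the empirical covariance matrix,
`tr(P) = (1/(M−1)) ∑ᵢ ‖X⁽ⁱ⁾ − x̄‖²`. -/
noncomputable def trP {d M : ℕ} (X : Fin M → EuclideanSpace ℝ (Fin d)) : ℝ :=
  ((M : ℝ) - 1)⁻¹ * ∑ i, ‖X i - ensMean X‖ ^ 2

lemma colMat_norm_le {d M : ℕ} (w : Fin M → EuclideanSpace ℝ (Fin d)) :
    ‖(Matrix.of fun j i => w i j : Matrix (Fin d) (Fin M) ℝ)‖ ≤ Real.sqrt (∑ i, ‖w i‖ ^ 2) := by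
  rw [Matrix.l2_opNorm_def]
  apply ContinuousLinearMap.opNorm_le_bound _ (Real.sqrt_nonneg _)
  intro x
  have happ : (Matrix.toEuclideanLin (Matrix.of fun j i => w i j : Matrix (Fin d) (Fin M) ℝ)) x
      = ∑ i, x i • w i := by
    apply (WithLp.linearEquiv 2 ℝ (Fin d → ℝ)).injective
    rw [map_sum]
    ext j
    simp [Matrix.toEuclideanLin_apply, Matrix.mulVec, dotProduct,
      Finset.sum_apply, mul_comm]
  have hrfl : ((Matrix.toEuclideanLin.trans LinearMap.toContinuousLinearMap)
      (Matrix.of fun j i => w i j : Matrix (Fin d) (Fin M) ℝ)) x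
      = (Matrix.toEuclideanLin (Matrix.of fun j i => w i j : Matrix (Fin d) (Fin M) ℝ)) x := rfl
  rw [hrfl, happ]
  calc ‖∑ i, x i • w i‖ ≤ ∑ i, ‖x i • w i‖ := norm_sum_le _ _
    _ = ∑ i, |x i| * ‖w i‖ := by simp [norm_smul]
    _ ≤ Real.sqrt (∑ i, ‖w i‖ ^ 2) * ‖x‖ := by
        have hcs := Finset.sum_mul_sq_le_sq_mul_sq Finset.univ (fun i => |x i|) (fun i => ‖w i‖)
        have h1 : ∑ i, |x i| * ‖w i‖ = Real.sqrt ((∑ i, |x i| * ‖w i‖) ^ 2) := by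
          rw [Real.sqrt_sq (Finset.sum_nonneg fun i _ => by positivity)]
        rw [h1]
        have h2 : ‖x‖ = Real.sqrt (∑ i, |x i| ^ 2) := by
          rw [EuclideanSpace.norm_eq]; simp [Real.norm_eq_abs]
        rw [h2, ← Real.sqrt_mul (Finset.sum_nonneg fun i _ => by positivity), mul_comm]
        exact Real.sqrt_le_sqrt (by simpa [sq_abs] using hcs)

lemma devMat_norm_le {d M : ℕ} (w : Fin M → EuclideanSpace ℝ (Fin d)) :
    ‖devMat w‖ ≤ Real.sqrt (∑ i, ‖w i - ensMean w‖ ^ 2) :=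
  colMat_norm_le (fun i => w i - ensMean w)

lemma sum_sq_dev_le {d M : ℕ} (hM : (M : ℝ) ≠ 0) (w : Fin M → EuclideanSpace ℝ (Fin d)) :
    ∑ i, ‖w i - ensMean w‖ ^ 2 ≤ ∑ i, ‖w i‖ ^ 2 := by
  have hsum : ∑ i, w i = (M : ℝ) • ensMean w := by
    rw [ensMean, smul_smul, mul_inv_cancel₀ hM, one_smul]
  have key : ∑ i, ‖w i - ensMean w‖ ^ 2
      = (∑ i, ‖w i‖ ^ 2) - (M : ℝ) * ‖ensMean w‖ ^ 2 := by
    have expand : ∀ i, ‖w i - ensMean w‖ ^ 2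
        = ‖w i‖ ^ 2 - 2 * ⟪w i, ensMean w⟫ + ‖ensMean w‖ ^ 2 := fun i =>
      norm_sub_sq_real _ _
    simp_rw [expand]
    rw [Finset.sum_add_distrib, Finset.sum_sub_distrib, ← Finset.mul_sum, ← sum_inner, hsum,
      real_inner_smul_left, real_inner_self_eq_norm_sq]
    simp only [Finset.sum_const, Finset.card_univ, Fintype.card_fin, nsmul_eq_mul]
    ring
  rw [key]
  have : 0 ≤ (M : ℝ) * ‖ensMean w‖ ^ 2 := by positivity
  linarith

lemma sum_sq_dev_le' {d M : ℕ} (hM : (M : ℝ) ≠ 0) (w : Fin M → EuclideanSpace ℝ (Fin d))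
    (c : EuclideanSpace ℝ (Fin d)) :
    ∑ i, ‖w i - ensMean w‖ ^ 2 ≤ ∑ i, ‖w i - c‖ ^ 2 := by
  have hmean : ensMean (fun i => w i - c) = ensMean w - c := by
    rw [ensMean, ensMean, Finset.sum_sub_distrib, smul_sub]
    congr 1
    rw [Finset.sum_const, Finset.card_univ, Fintype.card_fin, ← Nat.cast_smul_eq_nsmul ℝ,
      smul_smul, inv_mul_cancel₀ hM, one_smul]
  have := sum_sq_dev_le hM (fun i => w i - c)
  simpa [hmean, sub_sub_sub_cancel_right] using this

lemma ensMean_sub {d M : ℕ} (u v : Fin M → EuclideanSpace ℝ (Fin d)) :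
    ensMean (fun i => u i - v i) = ensMean u - ensMean v := by
  rw [ensMean, ensMean, ensMean, Finset.sum_sub_distrib, smul_sub]

lemma devMat_sub {d M : ℕ} (u v : Fin M → EuclideanSpace ℝ (Fin d)) :
    devMat u - devMat v = devMat (fun i => u i - v i) := by
  ext j i
  simp [devMat, ensMean_sub]
  ring

lemma l2_opNorm_transpose_real {m n : ℕ} (A : Matrix (Fin m) (Fin n) ℝ) : ‖Aᵀ‖ = ‖A‖ := by
  rw [← Matrix.l2_opNorm_conjTranspose A]
  congr 1

/-- stability of the cross-covariance in the ensemble: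
`(1/(M−1)) ‖E_X 𝒢_Xᵀ − E_Y 𝒢_Yᵀ‖ ≤ 2L (tr(P_X)^{1/2} + tr(P_Y)^{1/2}) ·
((1/(M−1)) ∑ᵢ ‖X⁽ⁱ⁾ − Y⁽ⁱ⁾‖²)^{1/2}`. -/
theorem cross_covariance_stability {d p M : ℕ} (hM : 2 ≤ M) (L : ℝ≥0)
    (g : EuclideanSpace ℝ (Fin d) → EuclideanSpace ℝ (Fin p)) (hg : LipschitzWith L g)
    (X Y : Fin M → EuclideanSpace ℝ (Fin d)) :
    ((M : ℝ) - 1)⁻¹ * ‖devMat X * (devMat (g ∘ X))ᵀ - devMat Y * (devMat (g ∘ Y))ᵀ‖ ≤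
      2 * (L : ℝ) * (Real.sqrt (trP X) + Real.sqrt (trP Y)) *
        Real.sqrt (((M : ℝ) - 1)⁻¹ * ∑ i, ‖X i - Y i‖ ^ 2) := by
  have hM2 : (2 : ℝ) ≤ (M : ℝ) := by exact_mod_cast hM
  have hMpos : (0 : ℝ) < (M : ℝ) - 1 := by linarith
  have hM0 : (M : ℝ) ≠ 0 := by positivity
  set c := Real.sqrt ((M : ℝ) - 1) with hc
  have hc2 : c ^ 2 = (M : ℝ) - 1 := Real.sq_sqrt hMpos.le
  have hcpos : 0 < c := Real.sqrt_pos.mpr hMpos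
  set S := ∑ i, ‖X i - Y i‖ ^ 2 with hS
  have hSnn : 0 ≤ S := Finset.sum_nonneg fun i _ => by positivity
  set s := Real.sqrt (((M : ℝ) - 1)⁻¹ * S) with hs
  set a := Real.sqrt (trP X) with ha
  set b := Real.sqrt (trP Y) with hb
  have hLnn : (0 : ℝ) ≤ (L : ℝ) := L.coe_nonneg
  -- sqrt S = c * s
  have hsqrtS : Real.sqrt S = c * s := by
    rw [hs, hc, ← Real.sqrt_mul hMpos.le]
    congr 1
    field_simp
  -- general: bound on devMat of a Lipschitz image ensemble
  have hLip2 : ∀ (u v : Fin M → EuclideanSpace ℝ (Fin d)),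
      ∑ i, ‖g (u i) - g (v i)‖ ^ 2 ≤ (L : ℝ) ^ 2 * ∑ i, ‖u i - v i‖ ^ 2 := by
    intro u v
    rw [Finset.mul_sum]
    apply Finset.sum_le_sum
    intro i _
    have := hg.dist_le_mul (u i) (v i)
    rw [dist_eq_norm, dist_eq_norm] at this
    have h0 : (0 : ℝ) ≤ ‖g (u i) - g (v i)‖ := norm_nonneg _
    nlinarith [norm_nonneg (u i - v i)]
  -- ‖devMat X‖ ≤ c * a
  have hdevX : ‖devMat X‖ ≤ c * a := by
    refine (devMat_norm_le X).trans ?_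
    have : ∑ i, ‖X i - ensMean X‖ ^ 2 = ((M : ℝ) - 1) * trP X := by
      rw [trP]; field_simp
    rw [this, Real.sqrt_mul hMpos.le]
  -- ‖devMat (g ∘ Y)‖ ≤ L * (c * b)
  have hdevGY : ‖devMat (g ∘ Y)‖ ≤ (L : ℝ) * (c * b) := by
    refine (devMat_norm_le (g ∘ Y)).trans ?_
    have h1 : ∑ i, ‖(g ∘ Y) i - ensMean (g ∘ Y)‖ ^ 2
        ≤ ∑ i, ‖g (Y i) - g (ensMean Y)‖ ^ 2 := sum_sq_dev_le' hM0 (g ∘ Y) (g (ensMean Y))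
    have h2 : ∑ i, ‖g (Y i) - g (ensMean Y)‖ ^ 2
        ≤ (L : ℝ) ^ 2 * ∑ i, ‖Y i - ensMean Y‖ ^ 2 := hLip2 Y (fun _ => ensMean Y)
    have h3 : ∑ i, ‖Y i - ensMean Y‖ ^ 2 = ((M : ℝ) - 1) * trP Y := by
      rw [trP]; field_simp
    calc Real.sqrt (∑ i, ‖(g ∘ Y) i - ensMean (g ∘ Y)‖ ^ 2)
        ≤ Real.sqrt ((L : ℝ) ^ 2 * (((M : ℝ) - 1) * trP Y)) := by
          apply Real.sqrt_le_sqrt; rw [← h3]; exact h1.trans h2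
      _ = (L : ℝ) * (c * b) := by
          rw [Real.sqrt_mul (by positivity), Real.sqrt_sq hLnn, Real.sqrt_mul hMpos.le]
  -- ‖devMat X - devMat Y‖ ≤ c * s
  have hdevXY : ‖devMat X - devMat Y‖ ≤ c * s := by
    rw [devMat_sub]
    refine (devMat_norm_le _).trans ?_
    rw [← hsqrtS]
    exact Real.sqrt_le_sqrt (sum_sq_dev_le hM0 _)
  -- ‖devMat (g∘X) - devMat (g∘Y)‖ ≤ L * (c * s)
  have hdevG : ‖devMat (g ∘ X) - devMat (g ∘ Y)‖ ≤ (L : ℝ) * (c * s) := by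
    rw [devMat_sub]
    refine (devMat_norm_le _).trans ?_
    have h1 := sum_sq_dev_le hM0 (fun i => (g ∘ X) i - (g ∘ Y) i)
    have h2 := hLip2 X Y
    calc Real.sqrt (∑ i, ‖(fun i => (g ∘ X) i - (g ∘ Y) i) i
            - ensMean (fun i => (g ∘ X) i - (g ∘ Y) i)‖ ^ 2)
        ≤ Real.sqrt ((L : ℝ) ^ 2 * S) := by
          apply Real.sqrt_le_sqrt
          exact h1.trans (by simpa using h2)
      _ = (L : ℝ) * (c * s) := by
          rw [Real.sqrt_mul (by positivity), Real.sqrt_sq hLnn, hsqrtS]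
  -- decompose the difference
  have hdecomp : devMat X * (devMat (g ∘ X))ᵀ - devMat Y * (devMat (g ∘ Y))ᵀ
      = devMat X * (devMat (g ∘ X) - devMat (g ∘ Y))ᵀ
        + (devMat X - devMat Y) * (devMat (g ∘ Y))ᵀ := by
    rw [Matrix.transpose_sub, Matrix.mul_sub, Matrix.sub_mul]
    abel
  have hnorm : ‖devMat X * (devMat (g ∘ X))ᵀ - devMat Y * (devMat (g ∘ Y))ᵀ‖
      ≤ (c * a) * ((L : ℝ) * (c * s)) + (c * s) * ((L : ℝ) * (c * b)) := by
    rw [hdecomp]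
    refine (norm_add_le _ _).trans ?_
    have t1 : ‖devMat X * (devMat (g ∘ X) - devMat (g ∘ Y))ᵀ‖
        ≤ (c * a) * ((L : ℝ) * (c * s)) := by
      refine (Matrix.l2_opNorm_mul _ _).trans ?_
      rw [l2_opNorm_transpose_real]
      exact mul_le_mul hdevX hdevG (norm_nonneg _) (by positivity)
    have t2 : ‖(devMat X - devMat Y) * (devMat (g ∘ Y))ᵀ‖
        ≤ (c * s) * ((L : ℝ) * (c * b)) := by
      refine (Matrix.l2_opNorm_mul _ _).trans ?_
      rw [l2_opNorm_transpose_real]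
      exact mul_le_mul hdevXY hdevGY (norm_nonneg _) (by positivity)
    linarith
  have hann : 0 ≤ a := Real.sqrt_nonneg _
  have hbnn : 0 ≤ b := Real.sqrt_nonneg _
  have hsnn : 0 ≤ s := Real.sqrt_nonneg _
  calc ((M : ℝ) - 1)⁻¹ * ‖devMat X * (devMat (g ∘ X))ᵀ - devMat Y * (devMat (g ∘ Y))ᵀ‖
      ≤ ((M : ℝ) - 1)⁻¹ * ((c * a) * ((L : ℝ) * (c * s)) + (c * s) * ((L : ℝ) * (c * b))) :=
        mul_le_mul_of_nonneg_left hnorm (by positivity)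
    _ = (L : ℝ) * (a + b) * s := by
        have : (c * a) * ((L : ℝ) * (c * s)) + (c * s) * ((L : ℝ) * (c * b))
            = ((M : ℝ) - 1) * ((L : ℝ) * (a + b) * s) := by
          rw [← hc2]; ring
        rw [this, ← mul_assoc, inv_mul_cancel₀ (ne_of_gt hMpos), one_mul]
    _ ≤ 2 * (L : ℝ) * (a + b) * s := by
        nlinarith [mul_nonneg (mul_nonneg hLnn (add_nonneg hann hbnn)) hsnn]
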